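/- Let β ≥ 0, ε ∈ [0,1), and let v : [0,1] → ℝ. Suppose there exist y̲, ȳ ∈ [0,1] with y̲ ≤ ȳ such that y ↦ v(y) − ln(1+βy) is strictly increasing on [0,y̲] and strictly decreasing on [y̲,1], and y ↦ v(y) − ln(1−εy) is strictly increasing on [0,ȳ] and strictly decreasing on [ȳ,1]. For x ∈ [0,1] define G_x : [0,1] → ℝ by G_x(y) := v(y) − ln((1+βy)/(1+βx))·1_{x<y} − ln((1−εy)/(1−εx))·1_{x>y}. Then for every x ∈ [0,1], G_x attains its maximum over [0,1] at exactly one point, namely at ŷ(x) := y̲ if x < y̲, ŷ(x) := x if y̲ ≤ x ≤ ȳ, and ŷ(x) := ȳ if x > ȳ; i.e., the set of maximizers of G_x on [0,1] is the singleton { ŷ(x) }. -/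
import Mathlib


open Set

/-- The net value `G_x(y)` of rebalancing the wealth fraction in the stock from `x`
to `y`, accounting for proportional transaction costs. -/
noncomputable def rebalanceGain (β ε : ℝ) (v : ℝ → ℝ) (x y : ℝ) : ℝ :=
  v y - Real.log ((1 + β * y) / (1 + β * x)) * (if x < y then 1 else 0)
      - Real.log ((1 - ε * y) / (1 - ε * x)) * (if y < x then 1 else 0)

lemma rebalanceGain_buy (β ε : ℝ) (hβ : 0 ≤ β) (v : ℝ → ℝ) {x y : ℝ}
    (hx : 0 ≤ x) (hxy : x ≤ y) :
    rebalanceGain β ε v x y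
      = (v y - Real.log (1 + β * y)) + Real.log (1 + β * x) := by
  have hpx : (0:ℝ) < 1 + β * x := by nlinarith [mul_nonneg hβ hx]
  have hpy : (0:ℝ) < 1 + β * y := by nlinarith [mul_nonneg hβ (hx.trans hxy)]
  rcases eq_or_lt_of_le hxy with rfl | h
  · simp only [rebalanceGain, lt_irrefl, if_false, mul_zero, sub_zero]
    ring
  · unfold rebalanceGain
    rw [if_pos h, if_neg (not_lt.2 h.le), Real.log_div hpy.ne' hpx.ne']
    ring

lemma rebalanceGain_sell (β ε : ℝ) (hε0 : 0 ≤ ε) (hε1 : ε < 1) (v : ℝ → ℝ) {x y : ℝ}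
    (hx : x ≤ 1) (hyx : y ≤ x) :
    rebalanceGain β ε v x y
      = (v y - Real.log (1 - ε * y)) + Real.log (1 - ε * x) := by
  have hεx : ε * x ≤ ε := by nlinarith
  have hpx : (0:ℝ) < 1 - ε * x := by linarith
  have hpy : (0:ℝ) < 1 - ε * y := by nlinarith [mul_le_mul_of_nonneg_left hyx hε0]
  rcases eq_or_lt_of_le hyx with rfl | h
  · simp only [rebalanceGain, lt_irrefl, if_false, mul_zero, sub_zero]
    ring
  · unfold rebalanceGain
    rw [if_neg (not_lt.2 h.le), if_pos h, Real.log_div hpy.ne' hpx.ne']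
    ring

/-- Theorem 4.2: for each `x ∈ [0,1]`, the set of maximizers of `G_x` over `[0,1]`
is the singleton consisting of the clamp of `x` onto the no-trade interval `[y̲, ȳ]`. -/
theorem optimal_rebalance_unique (β ε : ℝ) (hβ : 0 ≤ β) (hε0 : 0 ≤ ε) (hε1 : ε < 1)
    (v : ℝ → ℝ) (yl yu : ℝ)
    (hyl : yl ∈ Icc (0:ℝ) 1) (hyu : yu ∈ Icc (0:ℝ) 1) (hle : yl ≤ yu)
    (hmono₁ : StrictMonoOn (fun y => v y - Real.log (1 + β * y)) (Icc 0 yl))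
    (hanti₁ : StrictAntiOn (fun y => v y - Real.log (1 + β * y)) (Icc yl 1))
    (hmono₂ : StrictMonoOn (fun y => v y - Real.log (1 - ε * y)) (Icc 0 yu))
    (hanti₂ : StrictAntiOn (fun y => v y - Real.log (1 - ε * y)) (Icc yu 1)) :
    ∀ x ∈ Icc (0:ℝ) 1,
      {y | y ∈ Icc (0:ℝ) 1 ∧ ∀ z ∈ Icc (0:ℝ) 1,
          rebalanceGain β ε v x z ≤ rebalanceGain β ε v x y}
        = {if x < yl then yl else if x ≤ yu then x else yu} := by
  intro x hx
  have main : ∀ w : ℝ, w ∈ Icc (0:ℝ) 1 →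
      (∀ z ∈ Icc (0:ℝ) 1, z ≠ w →
        rebalanceGain β ε v x z < rebalanceGain β ε v x w) →
      {y | y ∈ Icc (0:ℝ) 1 ∧ ∀ z ∈ Icc (0:ℝ) 1,
          rebalanceGain β ε v x z ≤ rebalanceGain β ε v x y} = {w} := by
    intro w hw hkey
    ext y
    simp only [mem_setOf_eq, mem_singleton_iff]
    constructor
    · rintro ⟨hyI, hmax⟩
      by_contra hne
      exact absurd (hmax w hw) (not_le.2 (hkey y hyI hne))
    · rintro rfl
      refine ⟨hw, fun z hz => ?_⟩
      rcases eq_or_ne z y with rfl | hne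
      · exact le_refl _
      · exact (hkey z hz hne).le
  have hGxx : rebalanceGain β ε v x x = v x := by
    simp only [rebalanceGain, lt_irrefl, if_false, mul_zero, sub_zero]
  rcases lt_or_ge x yl with hxl | hxl
  · rw [if_pos hxl]
    refine main yl hyl ?_
    intro z hz hne
    rw [rebalanceGain_buy β ε hβ v hx.1 hxl.le]
    rcases le_or_gt x z with hxz | hzx
    · rw [rebalanceGain_buy β ε hβ v hx.1 hxz]
      rcases hne.lt_or_gt with h1 | h2
      · have := hmono₁ ⟨hz.1, h1.le⟩ ⟨hyl.1, le_refl yl⟩ h1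
        simp only at this
        linarith
      · have := hanti₁ ⟨le_refl yl, hyl.2⟩ ⟨h2.le, hz.2⟩ h2
        simp only at this
        linarith
    · rw [rebalanceGain_sell β ε hε0 hε1 v hx.2 hzx.le]
      have h1 : v z - Real.log (1 - ε * z) < v x - Real.log (1 - ε * x) :=
        hmono₂ ⟨hz.1, hzx.le.trans (hxl.le.trans hle)⟩ ⟨hx.1, hxl.le.trans hle⟩ hzx
      have h2 : v x - Real.log (1 + β * x) < v yl - Real.log (1 + β * yl) :=
        hmono₁ ⟨hx.1, hxl.le⟩ ⟨hyl.1, le_refl yl⟩ hxl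
      linarith
  · rw [if_neg (not_lt.2 hxl)]
    rcases le_or_gt x yu with hxu | hxu
    · rw [if_pos hxu]
      refine main x hx ?_
      intro z hz hne
      rw [hGxx]
      rcases hne.lt_or_gt with h1 | h2
      · rw [rebalanceGain_sell β ε hε0 hε1 v hx.2 h1.le]
        have := hmono₂ ⟨hz.1, h1.le.trans hxu⟩ ⟨hx.1, hxu⟩ h1
        simp only at this
        linarith
      · rw [rebalanceGain_buy β ε hβ v hx.1 h2.le]
        have := hanti₁ ⟨hxl, hx.2⟩ ⟨hxl.trans h2.le, hz.2⟩ h2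
        simp only at this
        linarith
    · rw [if_neg (not_le.2 hxu)]
      refine main yu hyu ?_
      intro z hz hne
      rw [rebalanceGain_sell β ε hε0 hε1 v hx.2 hxu.le]
      rcases le_or_gt z x with hzx | hxz
      · rw [rebalanceGain_sell β ε hε0 hε1 v hx.2 hzx]
        rcases hne.lt_or_gt with h1 | h2
        · have := hmono₂ ⟨hz.1, h1.le⟩ ⟨hyu.1, le_refl yu⟩ h1
          simp only at this
          linarith
        · have := hanti₂ ⟨le_refl yu, hyu.2⟩ ⟨h2.le, hz.2⟩ h2
          simp only at this
          linarith
      · rw [rebalanceGain_buy β ε hβ v hx.1 hxz.le]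
        have h1 : v z - Real.log (1 + β * z) < v x - Real.log (1 + β * x) :=
          hanti₁ ⟨hle.trans hxu.le, hx.2⟩ ⟨hle.trans (hxu.le.trans hxz.le), hz.2⟩ hxz
        have h2 : v x - Real.log (1 - ε * x) < v yu - Real.log (1 - ε * yu) :=
          hanti₂ ⟨le_refl yu, hyu.2⟩ ⟨hxu.le, hx.2⟩ hxu
        linarith
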